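/- Summability of the Voronoi-cell interaction. Let A = {0,1} and d = 2. For ω ∈ A^{Z²} set C(ω) = {i ∈ Z² : ω(i) = 1}, and for i ∈ C(ω) let Vor_i(ω) = {y ∈ R² : ‖i−y‖₂ ≤ ‖k−y‖₂ for all k ∈ C(ω), k ≠ i} be the Voronoi cell of i (Vor_i(ω) = R² if C(ω) = {i}). Let Φ be a bounded real-valued function on subsets of R² such that |Φ(B)| ≤ C/diam(B)^{2+ε} for all B ⊂ R², for some constants C > 0 and ε > 0, and set K^j(ω) = Φ(Vor_j(ω)) for j ∈ C(ω) and K^j(ω) = 0 otherwise. Then sup_{i∈Z²} sup_{ω∈A^{Z²}} Σ_{j ∈ C(ω) : i ∈ Vor_j(ω)} |K^j(ω)| < ∞. -/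
import Mathlib


open scoped ENNReal NNReal

namespace VoronoiInteraction

/-- The standard embedding of `ℤ²` into the Euclidean plane. -/
noncomputable def emb (i : ℤ × ℤ) : EuclideanSpace ℝ (Fin 2) :=
  (WithLp.equiv 2 (Fin 2 → ℝ)).symm ![(i.1 : ℝ), (i.2 : ℝ)]

/-- The set `C(ω)` of occupied sites of the configuration `ω`. -/
def occ (ω : ℤ × ℤ → Bool) : Set (ℤ × ℤ) := {i | ω i = true}

/-- The Voronoi cell of the site `j` in the configuration `ω`: the set of points of the
plane at least as close to `j` as to every other occupied site. -/
noncomputable def Vor (ω : ℤ × ℤ → Bool) (j : ℤ × ℤ) : Set (EuclideanSpace ℝ (Fin 2)) :=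
  {y | ∀ k ∈ occ ω, k ≠ j → dist (emb j) y ≤ dist (emb k) y}

/-- The Voronoi-cell interaction `K^j(ω) = Φ(Vor_j(ω))` for occupied `j`, `0` otherwise. -/
noncomputable def K (Φ : Set (EuclideanSpace ℝ (Fin 2)) → ℝ) (ω : ℤ × ℤ → Bool)
    (j : ℤ × ℤ) : ℝ :=
  if ω j = true then Φ (Vor ω j) else 0

/-- The Euclidean distance between two lattice points dominates the sup-distance. -/
lemma max_natAbs_le_dist (i j : ℤ × ℤ) :
    ((max (i.1 - j.1).natAbs (i.2 - j.2).natAbs : ℕ) : ℝ) ≤ dist (emb i) (emb j) := by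
  have hd : dist (emb i) (emb j) =
      Real.sqrt (((i.1 : ℝ) - j.1) ^ 2 + ((i.2 : ℝ) - j.2) ^ 2) := by
    rw [EuclideanSpace.dist_eq, Fin.sum_univ_two]
    simp [emb, Real.dist_eq, sq_abs]
  rw [hd]
  push_cast [Nat.cast_natAbs]
  refine max_le ?_ ?_
  · refine (Real.le_sqrt (abs_nonneg _) (by positivity)).2 ?_
    rw [sq_abs]; nlinarith [sq_nonneg ((i.2 : ℝ) - j.2)]
  · refine (Real.le_sqrt (abs_nonneg _) (by positivity)).2 ?_
    rw [sq_abs]; nlinarith [sq_nonneg ((i.1 : ℝ) - j.1)]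

lemma real_summable_aux {q : ℝ} (hq : 1 < q) :
    Summable fun x : ℤ => ((1 + (x.natAbs : ℝ)) ^ q)⁻¹ := by
  have hN : Summable fun n : ℕ => ((1 + (n : ℝ)) ^ q)⁻¹ := by
    have := (Real.summable_one_div_nat_add_rpow 1 q).2 hq
    refine this.congr fun n => ?_
    rw [abs_of_nonneg (by positivity), one_div, add_comm]
  refine Summable.of_nat_of_neg ?_ ?_
  · exact hN.congr fun n => by rw [Int.natAbs_natCast]
  · exact hN.congr fun n => by rw [Int.natAbs_neg, Int.natAbs_natCast]

/-- Finiteness of the one-dimensional comparison series. -/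
lemma tsum_h_lt_top {q : ℝ} (hq : 1 < q) :
    ∑' x : ℤ, ((1 + (x.natAbs : ℝ≥0∞)) ^ q)⁻¹ < ⊤ := by
  have key : ∀ x : ℤ, ((1 + (x.natAbs : ℝ≥0∞)) ^ q)⁻¹
      = (((((1 + (x.natAbs : ℝ≥0)) ^ q)⁻¹ : ℝ≥0)) : ℝ≥0∞) := by
    intro x
    rw [ENNReal.coe_inv (NNReal.rpow_pos (by positivity)).ne',
      ENNReal.coe_rpow_of_nonneg _ (by positivity)]
    push_cast
    ring_nf
  simp_rw [key]
  rw [lt_top_iff_ne_top, ENNReal.tsum_coe_ne_top_iff_summable]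
  rw [← NNReal.summable_coe]
  refine (real_summable_aux hq).congr fun x => ?_
  push_cast
  ring_nf

/-- The key two-dimensional comparison bound. -/
lemma div_max_le {p q : ℝ} (hq : 0 ≤ q) (hpq : p = 2 * q) (C : ℝ≥0) (v : ℤ × ℤ)
    (hv : v ≠ 0) :
    (C : ℝ≥0∞) / ((max v.1.natAbs v.2.natAbs : ℕ) : ℝ≥0∞) ^ p ≤
      ((C : ℝ≥0∞) * (2 : ℝ≥0∞) ^ p) *
        (((1 + (v.1.natAbs : ℝ≥0∞)) ^ q)⁻¹ * ((1 + (v.2.natAbs : ℝ≥0∞)) ^ q)⁻¹) := by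
  have hp0 : 0 ≤ p := by rw [hpq]; positivity
  set a := v.1.natAbs
  set b := v.2.natAbs
  set N := max a b with hN
  have hN1 : 1 ≤ N := by
    rcases Nat.eq_zero_or_pos N with h | h
    · exfalso
      apply hv
      have ha : a = 0 := le_antisymm (h ▸ le_max_left a b) (Nat.zero_le _)
      have hb : b = 0 := le_antisymm (h ▸ le_max_right a b) (Nat.zero_le _)
      have h1 : v.1 = 0 := Int.natAbs_eq_zero.1 ha
      have h2 : v.2 = 0 := Int.natAbs_eq_zero.1 hb
      exact Prod.ext h1 h2
    · exact h
  -- X ≤ 2^p * N^p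
  have hX : ((1 + (a : ℝ≥0∞)) ^ q) * ((1 + (b : ℝ≥0∞)) ^ q)
      ≤ (2 : ℝ≥0∞) ^ p * ((N : ℕ) : ℝ≥0∞) ^ p := by
    have h1 : ((1 + (a : ℝ≥0∞)) ^ q) * ((1 + (b : ℝ≥0∞)) ^ q)
        = ((1 + (a : ℝ≥0∞)) * (1 + (b : ℝ≥0∞))) ^ q :=
      (ENNReal.mul_rpow_of_nonneg _ _ hq).symm
    have h2 : (1 + (a : ℝ≥0∞)) * (1 + (b : ℝ≥0∞))
        ≤ (1 + ((N : ℕ) : ℝ≥0∞)) * (1 + ((N : ℕ) : ℝ≥0∞)) := by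
      gcongr
      · exact_mod_cast le_max_left a b
      · exact_mod_cast le_max_right a b
    have h3 : ((1 + ((N : ℕ) : ℝ≥0∞)) * (1 + ((N : ℕ) : ℝ≥0∞))) ^ q
        = (1 + ((N : ℕ) : ℝ≥0∞)) ^ p := by
      rw [← sq, ← ENNReal.rpow_natCast _ 2, ← ENNReal.rpow_mul]
      norm_num [hpq]
    have h4 : (1 + ((N : ℕ) : ℝ≥0∞)) ^ p ≤ (2 * ((N : ℕ) : ℝ≥0∞)) ^ p := by
      refine ENNReal.rpow_le_rpow ?_ hp0
      have : (1 : ℝ≥0∞) ≤ ((N : ℕ) : ℝ≥0∞) := by exact_mod_cast hN1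
      calc (1 : ℝ≥0∞) + ((N : ℕ) : ℝ≥0∞) ≤ ((N : ℕ) : ℝ≥0∞) + ((N : ℕ) : ℝ≥0∞) := by gcongr
        _ = 2 * ((N : ℕ) : ℝ≥0∞) := (two_mul _).symm
    calc ((1 + (a : ℝ≥0∞)) ^ q) * ((1 + (b : ℝ≥0∞)) ^ q)
        = ((1 + (a : ℝ≥0∞)) * (1 + (b : ℝ≥0∞))) ^ q := h1
      _ ≤ ((1 + ((N : ℕ) : ℝ≥0∞)) * (1 + ((N : ℕ) : ℝ≥0∞))) ^ q :=
          ENNReal.rpow_le_rpow h2 hq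
      _ = (1 + ((N : ℕ) : ℝ≥0∞)) ^ p := h3
      _ ≤ (2 * ((N : ℕ) : ℝ≥0∞)) ^ p := h4
      _ = (2 : ℝ≥0∞) ^ p * ((N : ℕ) : ℝ≥0∞) ^ p := ENNReal.mul_rpow_of_nonneg _ _ hp0
  have h2p_ne_top : (2 : ℝ≥0∞) ^ p ≠ ⊤ := ENNReal.rpow_ne_top_of_nonneg hp0 (by norm_num)
  have h2p_ne_zero : (2 : ℝ≥0∞) ^ p ≠ 0 :=
    (ENNReal.rpow_pos (by norm_num) (by norm_num)).ne'
  have ha_ne_top : (1 + (a : ℝ≥0∞)) ^ q ≠ ⊤ :=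
    ENNReal.rpow_ne_top_of_nonneg hq (by simp [ENNReal.add_ne_top])
  have hb_ne_top : (1 + (b : ℝ≥0∞)) ^ q ≠ ⊤ :=
    ENNReal.rpow_ne_top_of_nonneg hq (by simp [ENNReal.add_ne_top])
  have hinv : (((N : ℕ) : ℝ≥0∞) ^ p)⁻¹
      ≤ (2 : ℝ≥0∞) ^ p * (((1 + (a : ℝ≥0∞)) ^ q)⁻¹ * ((1 + (b : ℝ≥0∞)) ^ q)⁻¹) := by
    have e1 : ((1 + (a : ℝ≥0∞)) ^ q * (1 + (b : ℝ≥0∞)) ^ q)⁻¹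
        = ((1 + (a : ℝ≥0∞)) ^ q)⁻¹ * ((1 + (b : ℝ≥0∞)) ^ q)⁻¹ :=
      ENNReal.mul_inv (Or.inr hb_ne_top) (Or.inl ha_ne_top)
    have e2 : ((2 : ℝ≥0∞) ^ p * ((N : ℕ) : ℝ≥0∞) ^ p)⁻¹
        = ((2 : ℝ≥0∞) ^ p)⁻¹ * (((N : ℕ) : ℝ≥0∞) ^ p)⁻¹ :=
      ENNReal.mul_inv (Or.inl h2p_ne_zero) (Or.inl h2p_ne_top)
    calc (((N : ℕ) : ℝ≥0∞) ^ p)⁻¹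
        = (2 : ℝ≥0∞) ^ p * (((2 : ℝ≥0∞) ^ p)⁻¹ * (((N : ℕ) : ℝ≥0∞) ^ p)⁻¹) := by
          rw [← mul_assoc, ENNReal.mul_inv_cancel h2p_ne_zero h2p_ne_top, one_mul]
      _ = (2 : ℝ≥0∞) ^ p * ((2 : ℝ≥0∞) ^ p * ((N : ℕ) : ℝ≥0∞) ^ p)⁻¹ := by rw [e2]
      _ ≤ (2 : ℝ≥0∞) ^ p * ((1 + (a : ℝ≥0∞)) ^ q * (1 + (b : ℝ≥0∞)) ^ q)⁻¹ := by
          gcongr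
      _ = (2 : ℝ≥0∞) ^ p * (((1 + (a : ℝ≥0∞)) ^ q)⁻¹ * ((1 + (b : ℝ≥0∞)) ^ q)⁻¹) := by
          rw [e1]
  calc (C : ℝ≥0∞) / ((N : ℕ) : ℝ≥0∞) ^ p
      = (C : ℝ≥0∞) * (((N : ℕ) : ℝ≥0∞) ^ p)⁻¹ := div_eq_mul_inv _ _
    _ ≤ (C : ℝ≥0∞) * ((2 : ℝ≥0∞) ^ p *
        (((1 + (a : ℝ≥0∞)) ^ q)⁻¹ * ((1 + (b : ℝ≥0∞)) ^ q)⁻¹)) := by gcongr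
    _ = ((C : ℝ≥0∞) * (2 : ℝ≥0∞) ^ p) *
        (((1 + (a : ℝ≥0∞)) ^ q)⁻¹ * ((1 + (b : ℝ≥0∞)) ^ q)⁻¹) := by ring

/-- **Summability of the Voronoi-cell interaction.** If `Φ` is bounded and satisfies
`|Φ(B)| ≤ C / diam(B)^{2+ε}` (with the convention that the right-hand side vanishes for
sets of infinite diameter), then
`sup_{i ∈ ℤ²} sup_ω Σ_{j ∈ C(ω) : i ∈ Vor_j(ω)} |K^j(ω)| < ∞`. -/
theorem voronoi_interaction_summable (Φ : Set (EuclideanSpace ℝ (Fin 2)) → ℝ)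
    (C : ℝ≥0) (ε : ℝ) (hε : 0 < ε)
    (hbd : ∃ M : ℝ, ∀ B : Set (EuclideanSpace ℝ (Fin 2)), |Φ B| ≤ M)
    (hdecay : ∀ B : Set (EuclideanSpace ℝ (Fin 2)),
      (‖Φ B‖₊ : ℝ≥0∞) ≤ (C : ℝ≥0∞) / EMetric.diam B ^ ((2 : ℝ) + ε)) :
    (⨆ (i : ℤ × ℤ) (ω : ℤ × ℤ → Bool),
      ∑' j : {j : ℤ × ℤ // j ∈ occ ω ∧ emb i ∈ Vor ω j}, (‖K Φ ω j.1‖₊ : ℝ≥0∞)) < ⊤ := by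
  classical
  obtain ⟨M, hM⟩ := hbd
  set p : ℝ := 2 + ε with hp
  set q : ℝ := 1 + ε / 2 with hqdef
  have hpq : p = 2 * q := by rw [hp, hqdef]; ring
  have hq0 : (0 : ℝ) ≤ q := by rw [hqdef]; linarith
  have hq1 : (1 : ℝ) < q := by rw [hqdef]; linarith
  have hp0 : (0 : ℝ) ≤ p := by rw [hp]; linarith
  set g : ℤ × ℤ → ℝ≥0∞ := fun v =>
    if v = 0 then (‖M‖₊ : ℝ≥0∞)
    else (C : ℝ≥0∞) / ((max v.1.natAbs v.2.natAbs : ℕ) : ℝ≥0∞) ^ p with hg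
  -- finiteness of the comparison series
  have hgsum : ∑' v : ℤ × ℤ, g v < ⊤ := by
    set h : ℤ → ℝ≥0∞ := fun x => ((1 + (x.natAbs : ℝ≥0∞)) ^ q)⁻¹ with hh
    have hG : ∀ v : ℤ × ℤ, g v ≤
        (if v = 0 then (‖M‖₊ : ℝ≥0∞) else 0) +
          ((C : ℝ≥0∞) * (2 : ℝ≥0∞) ^ p) * (h v.1 * h v.2) := by
      intro v
      by_cases hv : v = 0
      · simp only [hg, hv, if_pos rfl]
        exact le_self_add
      · simp only [hg, if_neg hv]
        rw [zero_add]
        exact div_max_le hq0 hpq C v hv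
    calc ∑' v : ℤ × ℤ, g v
        ≤ ∑' v : ℤ × ℤ, ((if v = 0 then (‖M‖₊ : ℝ≥0∞) else 0) +
            ((C : ℝ≥0∞) * (2 : ℝ≥0∞) ^ p) * (h v.1 * h v.2)) :=
          ENNReal.tsum_le_tsum hG
      _ = (∑' v : ℤ × ℤ, if v = 0 then (‖M‖₊ : ℝ≥0∞) else 0) +
            ∑' v : ℤ × ℤ, ((C : ℝ≥0∞) * (2 : ℝ≥0∞) ^ p) * (h v.1 * h v.2) :=
          ENNReal.tsum_add
      _ = (‖M‖₊ : ℝ≥0∞) + ((C : ℝ≥0∞) * (2 : ℝ≥0∞) ^ p) *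
            ((∑' x : ℤ, h x) * (∑' x : ℤ, h x)) := by
          congr 1
          · exact tsum_ite_eq 0 _
          · rw [ENNReal.tsum_prod']
            simp_rw [ENNReal.tsum_mul_left, ENNReal.tsum_mul_right]
      _ < ⊤ := by
          refine ENNReal.add_lt_top.2 ⟨ENNReal.coe_lt_top, ?_⟩
          refine ENNReal.mul_lt_top ?_ ?_
          · exact ENNReal.mul_lt_top ENNReal.coe_lt_top
              (ENNReal.rpow_lt_top_of_nonneg hp0 (by norm_num))
          · exact ENNReal.mul_lt_top (tsum_h_lt_top hq1) (tsum_h_lt_top hq1)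
  refine lt_of_le_of_lt (iSup_le fun i => iSup_le fun ω => ?_) hgsum
  -- pointwise bound on the interaction
  have hpt : ∀ j : {j : ℤ × ℤ // j ∈ occ ω ∧ emb i ∈ Vor ω j},
      (‖K Φ ω j.1‖₊ : ℝ≥0∞) ≤ g (j.1 - i) := by
    rintro ⟨j, hjocc, hjvor⟩
    have hK : K Φ ω j = Φ (Vor ω j) := if_pos hjocc
    by_cases hji : j - i = 0
    · simp only [hg, hji, if_pos rfl, hK]
      have h1 : |Φ (Vor ω j)| ≤ |M| := (hM _).trans (le_abs_self M)
      exact_mod_cast (by simpa [← NNReal.coe_le_coe, Real.norm_eq_abs] using h1 :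
        ‖Φ (Vor ω j)‖₊ ≤ ‖M‖₊)
    · simp only [hg, if_neg hji, hK]
      refine (hdecay _).trans ?_
      refine ENNReal.div_le_div_left (ENNReal.rpow_le_rpow ?_ hp0) _
      -- N ≤ diam (Vor ω j)
      have hj_mem : emb j ∈ Vor ω j := fun k _ _ => by
        rw [dist_self]; exact dist_nonneg
      have hedist : (((max (j.1 - i.1).natAbs (j.2 - i.2).natAbs : ℕ)) : ℝ≥0∞)
          ≤ edist (emb j) (emb i) := by
        rw [edist_dist]
        rw [← ENNReal.ofReal_natCast]
        exact ENNReal.ofReal_le_ofReal (max_natAbs_le_dist j i)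
      have hsub1 : (j - i).1 = j.1 - i.1 := rfl
      have hsub2 : (j - i).2 = j.2 - i.2 := rfl
      rw [hsub1, hsub2]
      exact hedist.trans (EMetric.edist_le_diam_of_mem hj_mem hjvor)
  calc ∑' j : {j : ℤ × ℤ // j ∈ occ ω ∧ emb i ∈ Vor ω j}, (‖K Φ ω j.1‖₊ : ℝ≥0∞)
      ≤ ∑' j : {j : ℤ × ℤ // j ∈ occ ω ∧ emb i ∈ Vor ω j}, g (j.1 - i) :=
        ENNReal.tsum_le_tsum hpt
    _ ≤ ∑' j : ℤ × ℤ, g (j - i) :=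
        ENNReal.tsum_comp_le_tsum_of_injective Subtype.val_injective (fun j => g (j - i))
    _ = ∑' v : ℤ × ℤ, g v := (Equiv.subRight i).tsum_eq g

end VoronoiInteraction
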